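/- The piecewise linear Jensen approximation is a lower bound for the complementary first order loss function: for every x ∈ ℝ, f(x) = Σ_{i=1}^{W+1} p_i · max(x − X_i, 0) ≤ L̂(x, ω) = E[max(x − ω, 0)]. -/

import Mathlib

open MeasureTheory Finset

/-- The piecewise linear Jensen approximation is a lower bound for
the complementary first order loss function: for every `x`,
`f x = ∑ i, p i * max (x - X i) 0 ≤ E[max (x - ω) 0]`. -/
theorem jensen_approx_le_complementary_loss
    {Ω : Type*} [MeasurableSpace Ω] (μ : Measure Ω) [IsProbabilityMeasure μ]
    (X : Ω → ℝ) (hXmeas : Measurable X) (hXint : Integrable X μ)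
    (W : ℕ) (hW : 1 ≤ W)
    (S : Fin (W + 1) → Set ℝ)
    (hSmeas : ∀ i, MeasurableSet (S i))
    (hSinterval : ∀ i, (S i).OrdConnected)
    (hSdisj : Pairwise (Function.onFun Disjoint S))
    (hSunion : (⋃ i, S i) = Set.univ)
    (hSord : ∀ i j : Fin (W + 1), i < j → ∀ x ∈ S i, ∀ y ∈ S j, x ≤ y)
    (p : Fin (W + 1) → ℝ) (hp : ∀ i, p i = (μ (X ⁻¹' S i)).toReal)
    (hppos : ∀ i, 0 < p i)
    (Xm : Fin (W + 1) → ℝ)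
    (hXm : ∀ i, Xm i = (∫ a in X ⁻¹' S i, X a ∂μ) / p i)
    (f : ℝ → ℝ) (hf : ∀ x, f x = ∑ i, p i * max (x - Xm i) 0) :
    ∀ x : ℝ, f x ≤ ∫ a, max (x - X a) 0 ∂μ := by
  intro x
  have hTmeas : ∀ i, MeasurableSet (X ⁻¹' S i) := fun i => hXmeas (hSmeas i)
  have hTdisj : Pairwise (Function.onFun Disjoint fun i => X ⁻¹' S i) :=
    fun i j hij => Disjoint.preimage X (hSdisj hij)
  have hTunion : (⋃ i, X ⁻¹' S i) = Set.univ := by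
    rw [← Set.preimage_iUnion, hSunion, Set.preimage_univ]
  have hg : Integrable (fun a => max (x - X a) 0) μ :=
    ((integrable_const x).sub hXint).pos_part
  have hsplit : ∫ a, max (x - X a) 0 ∂μ = ∑ i, ∫ a in X ⁻¹' S i, max (x - X a) 0 ∂μ := by
    rw [← integral_iUnion_fintype hTmeas hTdisj (fun i => hg.integrableOn), hTunion,
      Measure.restrict_univ]
  have key : ∀ i, p i * max (x - Xm i) 0 ≤ ∫ a in X ⁻¹' S i, max (x - X a) 0 ∂μ := by
    intro i
    have hpi := hppos i
    have hnn : 0 ≤ ∫ a in X ⁻¹' S i, max (x - X a) 0 ∂μ :=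
      integral_nonneg fun a => le_max_right _ _
    have h1 : p i * (x - Xm i) = ∫ a in X ⁻¹' S i, (x - X a) ∂μ := by
      rw [integral_sub (integrableOn_const (C := x) (s := X ⁻¹' S i) (μ := μ) (measure_lt_top μ _).ne)
        hXint.integrableOn, setIntegral_const, hXm i, measureReal_def, ← hp i, smul_eq_mul]
      field_simp
    have h2 : ∫ a in X ⁻¹' S i, (x - X a) ∂μ ≤ ∫ a in X ⁻¹' S i, max (x - X a) 0 ∂μ :=
      integral_mono ((integrable_const x).sub hXint).integrableOn hg.integrableOn
        fun a => le_max_left _ _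
    have hmm : p i * max (x - Xm i) 0 = max (p i * (x - Xm i)) (p i * 0) :=
      (mul_max_of_nonneg _ _ hpi.le)
    rw [hmm, mul_zero]
    exact max_le (h1 ▸ h2) hnn
  rw [hf x, hsplit]
  exact Finset.sum_le_sum fun i _ => key i
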